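/- For all τ,ω ∈ ℂ with |τ| = 1 and |ω| ≤ 1, the denominator 2(1 − τz₁) − ω²z₂² does not vanish on 𝔹₂, the function F_{τ,ω} is holomorphic on 𝔹₂, maps 𝔹₂ into 𝔻, and satisfies F_{τ,ω}(z₁,0) = z₁ for every z₁ ∈ 𝔻. -/

import Mathlib

open Metric Set Complex

noncomputable section

/-- `ℂⁿ` with the Euclidean norm; `𝔹ₙ` is `Metric.ball 0 1` in this space. -/
abbrev En (n : ℕ) := EuclideanSpace ℂ (Fin n)

/-- The Möbius map `m_a` interchanging `0` and `a`. -/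
def mob (a z : ℂ) : ℂ := (a - z) / (1 - (starRingEnd ℂ) a * z)

/-- A Blaschke product of degree `k`: `z ↦ η * ∏ j, m_{α j}(z)` with `|η| = 1`, `α j ∈ 𝔻`. -/
def IsBlaschke (k : ℕ) (B : ℂ → ℂ) : Prop :=
  ∃ η : ℂ, ‖η‖ = 1 ∧ ∃ α : Fin k → ℂ, (∀ j, α j ∈ ball (0 : ℂ) 1) ∧
    ∀ z : ℂ, B z = η * ∏ j, mob (α j) z

/-- The Pick problem `𝔹ₙ → 𝔻`, `z j ↦ lam j`, is extremal: it is solvable by a holomorphic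
map `𝔹ₙ → 𝔻`, but by no holomorphic solution with `sup_{𝔹ₙ} |G| < 1`. -/
def ExtremalPick {n : ℕ} {ι : Type} (z : ι → En n) (lam : ι → ℂ) : Prop :=
  (∃ F : En n → ℂ, DifferentiableOn ℂ F (ball 0 1) ∧
      MapsTo F (ball (0 : En n) 1) (ball (0 : ℂ) 1) ∧ ∀ j, F (z j) = lam j) ∧
  ¬ ∃ G : En n → ℂ, DifferentiableOn ℂ G (ball 0 1) ∧ (∀ j, G (z j) = lam j) ∧
      ∃ r : ℝ, r < 1 ∧ ∀ x ∈ ball (0 : En n) 1, ‖G x‖ ≤ r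

/-- An extremal 3-point Pick problem is non-degenerate if no 2-point subproblem is extremal. -/
def ExtremalPick3Nondeg {n : ℕ} (z : Fin 3 → En n) (lam : Fin 3 → ℂ) : Prop :=
  ExtremalPick z lam ∧
    ∀ i j : Fin 3, i ≠ j → ¬ ExtremalPick ![z i, z j] ![lam i, lam j]

/-- The function `F_{τ,ω}` from the paper. -/
def Ftau (τ ω : ℂ) (z : En 2) : ℂ :=
  (2 * z 0 * (1 - τ * z 0) - (starRingEnd ℂ) τ * ω ^ 2 * (z 1) ^ 2) /
    (2 * (1 - τ * z 0) - ω ^ 2 * (z 1) ^ 2)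


section Aux

lemma key_ineq (τ ω : ℂ) (hτ : ‖τ‖ = 1) (hω : ‖ω‖ ≤ 1)
    (z : En 2) (hz : z ∈ ball (0 : En 2) 1) :
    Complex.normSq (2 * z 0 * (1 - τ * z 0) - (starRingEnd ℂ) τ * ω ^ 2 * (z 1) ^ 2)
      < Complex.normSq (2 * (1 - τ * z 0) - ω ^ 2 * (z 1) ^ 2) := by
  -- coordinates bound
  have hsum : ‖z 0‖ ^ 2 + ‖z 1‖ ^ 2 < 1 := by
    rw [mem_ball_zero_iff] at hz
    have h := EuclideanSpace.norm_eq z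
    have h2 : ‖z‖ ^ 2 < 1 := by nlinarith [norm_nonneg z]
    rw [h, Real.sq_sqrt (by positivity)] at h2
    simpa [Fin.sum_univ_two] using h2
  set u : ℂ := τ * z 0 with hu_def
  set w : ℂ := ω ^ 2 * (z 1) ^ 2 with hw_def
  set a : ℂ := 1 - u with ha_def
  set N : ℂ := 2 * z 0 * (1 - τ * z 0) - (starRingEnd ℂ) τ * ω ^ 2 * (z 1) ^ 2 with hN_def
  set M : ℂ := 2 * u * a - w with hM_def
  set D : ℂ := 2 * a - w with hD_def
  have hτ2 : τ * (starRingEnd ℂ) τ = 1 := by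
    rw [Complex.mul_conj]
    norm_cast
    simp [Complex.normSq_eq_norm_sq, hτ]
  have hM : τ * N = M := by
    simp only [hN_def, hM_def, hu_def, ha_def, hw_def]
    linear_combination (-(ω ^ 2 * (z 1) ^ 2)) * hτ2
  have hNM : Complex.normSq N = Complex.normSq M := by
    rw [← hM, map_mul, Complex.normSq_eq_norm_sq τ, hτ]
    ring
  have hau : ‖u‖ = ‖z 0‖ := by
    rw [hu_def, norm_mul, hτ, one_mul]
  -- the main identity
  have hC : (D * (starRingEnd ℂ) D : ℂ) - M * (starRingEnd ℂ) M =
      4 * (a * (starRingEnd ℂ) a) * (1 - u * (starRingEnd ℂ) u)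
        - (2 * (a ^ 2 * (starRingEnd ℂ) w) + 2 * (starRingEnd ℂ) (a ^ 2 * (starRingEnd ℂ) w)) := by
    simp only [hD_def, hM_def, ha_def, map_sub, map_mul, map_one, map_ofNat, map_pow,
      RingHomCompTriple.comp_apply, Complex.conj_conj, RingHom.id_apply]
    ring
  simp only [Complex.mul_conj] at hC
  have hid : Complex.normSq D - Complex.normSq M =
      4 * Complex.normSq a * (1 - Complex.normSq u) - 4 * (a ^ 2 * (starRingEnd ℂ) w).re := by
    have h := congrArg Complex.re hC
    simp only [Complex.sub_re, Complex.mul_re, Complex.add_re, Complex.ofReal_re,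
      Complex.ofReal_im, Complex.re_ofNat, Complex.im_ofNat, Complex.one_re, Complex.one_im,
      Complex.sub_im, Complex.mul_im, ← map_pow, Complex.conj_re, Complex.conj_im] at h ⊢
    linarith
  -- bounds
  have hR : (a ^ 2 * (starRingEnd ℂ) w).re ≤ Complex.normSq a * ‖w‖ := by
    calc (a ^ 2 * (starRingEnd ℂ) w).re ≤ ‖a ^ 2 * (starRingEnd ℂ) w‖ := Complex.re_le_norm _
    _ = Complex.normSq a * ‖w‖ := by
        rw [norm_mul, norm_pow, Complex.norm_conj, Complex.sq_norm]
  have hnu : Complex.normSq u = ‖z 0‖ ^ 2 := by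
    rw [Complex.normSq_eq_norm_sq, hau]
  have hwb : ‖w‖ ≤ ‖z 1‖ ^ 2 := by
    rw [hw_def, norm_mul, norm_pow, norm_pow]
    have : ‖ω‖ ^ 2 ≤ 1 := pow_le_one₀ (norm_nonneg ω) hω
    nlinarith [norm_nonneg (z 1)]
  have ha0 : a ≠ 0 := by
    intro h
    have : u = 1 := by rw [ha_def] at h; linear_combination -h
    rw [this] at hau
    simp at hau
    nlinarith [norm_nonneg (z 1), sq_nonneg (‖z 1‖)]
  have hapos : 0 < Complex.normSq a := Complex.normSq_pos.mpr ha0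
  rw [hNM]
  nlinarith [norm_nonneg w, sq_nonneg (‖z 1‖)]

lemma denom_pos (τ ω : ℂ) (hτ : ‖τ‖ = 1) (hω : ‖ω‖ ≤ 1)
    (z : En 2) (hz : z ∈ ball (0 : En 2) 1) :
    2 * (1 - τ * z 0) - ω ^ 2 * (z 1) ^ 2 ≠ 0 := by
  intro h
  have hk := key_ineq τ ω hτ hω z hz
  rw [h] at hk
  simp at hk
  exact absurd hk (not_lt.mpr (Complex.normSq_nonneg _))

end Aux

/-- for `|τ| = 1`, `|ω| ≤ 1`, the denominator of `F_{τ,ω}` does not vanish on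
`𝔹₂`, `F_{τ,ω}` is holomorphic on `𝔹₂`, maps `𝔹₂` into `𝔻`, and fixes `(z₁,0) ↦ z₁`. -/
theorem stmt_5 (τ ω : ℂ) (hτ : ‖τ‖ = 1) (hω : ‖ω‖ ≤ 1) :
    (∀ z ∈ ball (0 : En 2) 1, 2 * (1 - τ * z 0) - ω ^ 2 * (z 1) ^ 2 ≠ 0) ∧
    DifferentiableOn ℂ (Ftau τ ω) (ball (0 : En 2) 1) ∧
    MapsTo (Ftau τ ω) (ball (0 : En 2) 1) (ball (0 : ℂ) 1) ∧
    ∀ z₁ ∈ ball (0 : ℂ) 1, Ftau τ ω (WithLp.toLp 2 ![z₁, 0]) = z₁ := by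
  have hden : ∀ z ∈ ball (0 : En 2) 1, 2 * (1 - τ * z 0) - ω ^ 2 * (z 1) ^ 2 ≠ 0 :=
    fun z hz => denom_pos τ ω hτ hω z hz
  refine ⟨hden, ?_, ?_, ?_⟩
  · have h0 : Differentiable ℂ (fun z : En 2 => z 0) :=
      (EuclideanSpace.proj (𝕜 := ℂ) (0 : Fin 2)).differentiable
    have h1 : Differentiable ℂ (fun z : En 2 => z 1) :=
      (EuclideanSpace.proj (𝕜 := ℂ) (1 : Fin 2)).differentiable
    have hnum : Differentiable ℂ (fun z : En 2 =>
        2 * z 0 * (1 - τ * z 0) - (starRingEnd ℂ) τ * ω ^ 2 * (z 1) ^ 2) :=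
      (((differentiable_const 2).mul h0).mul
        ((differentiable_const 1).sub ((differentiable_const τ).mul h0))).sub
        ((differentiable_const _).mul (h1.pow 2))
    have hd : Differentiable ℂ (fun z : En 2 => 2 * (1 - τ * z 0) - ω ^ 2 * (z 1) ^ 2) :=
      ((differentiable_const 2).mul
        ((differentiable_const 1).sub ((differentiable_const τ).mul h0))).sub
        ((differentiable_const _).mul (h1.pow 2))
    have heq : Ftau τ ω = fun z : En 2 =>
        (2 * z 0 * (1 - τ * z 0) - (starRingEnd ℂ) τ * ω ^ 2 * (z 1) ^ 2) *
          (2 * (1 - τ * z 0) - ω ^ 2 * (z 1) ^ 2)⁻¹ := by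
      funext z; rw [Ftau, div_eq_mul_inv]
    rw [heq]
    exact hnum.differentiableOn.mul (hd.differentiableOn.inv hden)
  · intro z hz
    rw [mem_ball_zero_iff]
    have hk := key_ineq τ ω hτ hω z hz
    have hD := denom_pos τ ω hτ hω z hz
    rw [Ftau, norm_div, div_lt_one (norm_pos_iff.mpr hD)]
    have h1 := Complex.sq_norm (2 * z 0 * (1 - τ * z 0) - (starRingEnd ℂ) τ * ω ^ 2 * (z 1) ^ 2)
    have h2 := Complex.sq_norm (2 * (1 - τ * z 0) - ω ^ 2 * (z 1) ^ 2)
    have := norm_nonneg (2 * z 0 * (1 - τ * z 0) - (starRingEnd ℂ) τ * ω ^ 2 * (z 1) ^ 2)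
    nlinarith [norm_nonneg (2 * (1 - τ * z 0) - ω ^ 2 * (z 1) ^ 2)]
  · intro z₁ hz₁
    have h1 : (1 : ℂ) - τ * z₁ ≠ 0 := by
      intro h
      have : ‖τ * z₁‖ = 1 := by
        have : τ * z₁ = 1 := by linear_combination -h
        rw [this]; simp
      rw [norm_mul, hτ, one_mul] at this
      rw [mem_ball_zero_iff] at hz₁
      linarith
    show (2 * (![z₁, 0] : Fin 2 → ℂ) 0 * (1 - τ * (![z₁, 0] : Fin 2 → ℂ) 0) -
        (starRingEnd ℂ) τ * ω ^ 2 * ((![z₁, 0] : Fin 2 → ℂ) 1) ^ 2) /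
        (2 * (1 - τ * (![z₁, 0] : Fin 2 → ℂ) 0) - ω ^ 2 * ((![z₁, 0] : Fin 2 → ℂ) 1) ^ 2) = z₁
    simp only [Matrix.cons_val_zero, Matrix.cons_val_one, Matrix.head_cons]
    rw [div_eq_iff (by intro h; apply h1; linear_combination h / 2)]
    ring
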